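/- If (A, tr₁) and (A, tr₂) are two symmetric Frobenius structures on the same algebra A, with e ∈ Z(A) invertible satisfying tr₁(a) = tr₂(ea) for all a, then the dual bases satisfy b^{∨,2} = e·b^{∨,1}, the diamond products satisfy a ⋄₂ b = e·(a ⋄₁ b), and κ₂ = e²·κ₁. Consequently the map a ↦ e^{-1}a induces an isomorphism of (not necessarily unital) algebras (C(A), ⋄₁) → (C(A), ⋄₂). -/

import Mathlib

/-- Change of trace map: if `tr₁(a) = tr₂(e a)` for an invertible central `e`, then
`b^{∨,2} = e b^{∨,1}`, `a ⋄₂ b = e (a ⋄₁ b)`, `κ₂ = e² κ₁`, and `a ↦ e⁻¹ a` induces an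
isomorphism of (not necessarily unital) algebras `(C(A), ⋄₁) → (C(A), ⋄₂)`. -/
theorem stmt10 {k A : Type*} [Field k] [Ring A] [Algebra k A]
    {ι : Type*} [Fintype ι] [DecidableEq ι]
    (B : Module.Basis ι k A)
    (tr₁ tr₂ : A →ₗ[k] k)
    (hsym₁ : ∀ a b : A, tr₁ (a * b) = tr₁ (b * a))
    (hsym₂ : ∀ a b : A, tr₂ (a * b) = tr₂ (b * a))
    (hnd₁ : ∀ a : A, (∀ b : A, tr₁ (a * b) = 0) → a = 0)
    (hnd₂ : ∀ a : A, (∀ b : A, tr₂ (a * b) = 0) → a = 0)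
    (e f : A) (hcentral : ∀ x : A, e * x = x * e)
    (hef : e * f = 1) (hfe : f * e = 1)
    (htr : ∀ a : A, tr₁ a = tr₂ (e * a))
    (d₁ d₂ : ι → A)
    (hd₁ : ∀ i j, tr₁ (d₁ i * B j) = if i = j then 1 else 0)
    (hd₂ : ∀ i j, tr₂ (d₂ i * B j) = if i = j then 1 else 0)
    (diam₁ diam₂ : A → A → A)
    (hdiam₁ : ∀ a b, diam₁ a b = ∑ i, a * B i * b * d₁ i)
    (hdiam₂ : ∀ a b, diam₂ a b = ∑ i, a * B i * b * d₂ i)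
    (J : Submodule k A)
    (hJ : J = Submodule.span k {x : A | ∃ y z : A, x = y * z - z * y}) :
    (∀ i, d₂ i = e * d₁ i) ∧
    (∀ a b : A, diam₂ a b = e * diam₁ a b) ∧
    ((∑ i, ∑ j, B i * B j * d₂ i * d₂ j) = e * e * ∑ i, ∑ j, B i * B j * d₁ i * d₁ j) ∧
    (∀ a b : A, (Submodule.Quotient.mk (f * diam₁ a b) : A ⧸ J)
        = Submodule.Quotient.mk (diam₂ (f * a) (f * b))) ∧
    (∃ ψ : (A ⧸ J) ≃ₗ[k] (A ⧸ J),
      ∀ a : A, ψ (Submodule.Quotient.mk a) = Submodule.Quotient.mk (f * a)) := by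
  -- e commutes past products
  have hmove : ∀ x y : A, x * (e * y) = e * (x * y) := by
    intro x y
    rw [← mul_assoc, ← hcentral, mul_assoc]
  -- f is central
  have hfc : ∀ x : A, f * x = x * f := by
    intro x
    calc f * x = f * x * (e * f) := by rw [hef, mul_one]
      _ = f * (x * e) * f := by rw [← mul_assoc, mul_assoc f x e]
      _ = f * (e * x) * f := by rw [hcentral]
      _ = f * e * x * f := by rw [mul_assoc f e x]
      _ = x * f := by rw [hfe, one_mul]
  -- Part 1
  have hd₂eq : ∀ i, d₂ i = e * d₁ i := by
    intro i
    have key : ∀ b : A, tr₂ ((d₂ i - e * d₁ i) * b) = 0 := by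
      intro b
      have hb := Module.Basis.sum_repr B b
      rw [← hb, Finset.mul_sum, map_sum]
      apply Finset.sum_eq_zero
      intro j _
      rw [mul_smul_comm, map_smul]
      have hz : tr₂ ((d₂ i - e * d₁ i) * B j) = 0 := by
        rw [sub_mul, map_sub, hd₂, mul_assoc, ← htr, hd₁, sub_self]
      rw [hz, smul_zero]
    exact sub_eq_zero.mp (hnd₂ _ key)
  refine ⟨hd₂eq, ?_, ?_, ?_, ?_⟩
  · -- Part 2
    intro a b
    rw [hdiam₁, hdiam₂, Finset.mul_sum]
    refine Finset.sum_congr rfl fun i _ => ?_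
    rw [hd₂eq i, hmove (a * B i * b) (d₁ i), mul_assoc]
  · -- Part 3
    rw [Finset.mul_sum]
    refine Finset.sum_congr rfl fun i _ => ?_
    rw [Finset.mul_sum]
    refine Finset.sum_congr rfl fun j _ => ?_
    rw [hd₂eq i, hd₂eq j, hmove (B i * B j) (d₁ i), hmove (e * (B i * B j * d₁ i)) (d₁ j)]
    simp only [mul_assoc]
  · -- Part 4
    intro a b
    have heq : f * diam₁ a b = diam₂ (f * a) (f * b) := by
      rw [hdiam₁, hdiam₂, Finset.mul_sum]
      refine Finset.sum_congr rfl fun i _ => ?_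
      rw [hd₂eq i]
      simp only [mul_assoc]
      rw [hmove b (d₁ i), ← mul_assoc f e, hfe, one_mul]
    rw [heq]
  · -- Part 5
    have hJf : ∀ x ∈ J, f * x ∈ J := by
      intro x hx
      rw [hJ] at hx ⊢
      induction hx using Submodule.span_induction with
      | mem w hw =>
        obtain ⟨y, z, rfl⟩ := hw
        apply Submodule.subset_span
        refine ⟨f * y, z, ?_⟩
        rw [mul_sub, ← mul_assoc f y z, ← mul_assoc f z y, hfc z, mul_assoc z f y]
      | zero => simp
      | add u v _ _ hu hv => rw [mul_add]; exact Submodule.add_mem _ hu hv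
      | smul c u _ hu => rw [mul_smul_comm]; exact Submodule.smul_mem _ c hu
    have hJe : ∀ x ∈ J, e * x ∈ J := by
      intro x hx
      rw [hJ] at hx ⊢
      induction hx using Submodule.span_induction with
      | mem w hw =>
        obtain ⟨y, z, rfl⟩ := hw
        apply Submodule.subset_span
        refine ⟨e * y, z, ?_⟩
        rw [mul_sub, ← mul_assoc e y z, ← mul_assoc e z y, hcentral z, mul_assoc z e y]
      | zero => simp
      | add u v _ _ hu hv => rw [mul_add]; exact Submodule.add_mem _ hu hv
      | smul c u _ hu => rw [mul_smul_comm]; exact Submodule.smul_mem _ c hu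
    have hle_f : J ≤ J.comap (LinearMap.mulLeft k f) := fun x hx => hJf x hx
    have hle_e : J ≤ J.comap (LinearMap.mulLeft k e) := fun x hx => hJe x hx
    let φf := Submodule.mapQ J J (LinearMap.mulLeft k f) hle_f
    let φe := Submodule.mapQ J J (LinearMap.mulLeft k e) hle_e
    have hid : ∀ (g : A ⧸ J →ₗ[k] A ⧸ J), (∀ a : A, g (Submodule.Quotient.mk a)
        = Submodule.Quotient.mk a) → g = LinearMap.id := by
      intro g hg
      refine LinearMap.ext fun x => ?_
      obtain ⟨a, rfl⟩ := Submodule.Quotient.mk_surjective J x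
      exact hg a
    have h1 : φf.comp φe = LinearMap.id := by
      apply hid
      intro a
      simp only [φf, φe, LinearMap.comp_apply, Submodule.mapQ_apply, LinearMap.mulLeft_apply]
      rw [← mul_assoc, hfe, one_mul]
    have h2 : φe.comp φf = LinearMap.id := by
      apply hid
      intro a
      simp only [φf, φe, LinearMap.comp_apply, Submodule.mapQ_apply, LinearMap.mulLeft_apply]
      rw [← mul_assoc, hef, one_mul]
    refine ⟨LinearEquiv.ofLinear φf φe h1 h2, fun a => ?_⟩
    simp only [LinearEquiv.ofLinear_apply, φf, Submodule.mapQ_apply, LinearMap.mulLeft_apply]
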